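/- Let A and B be combinatorial classes and x_A, x_B > 0 with 0 < A(x_A) < ∞, 0 < B(x_B) < ∞, and H(x_A x_B) > 0, where H(z) = ∑_n a_n b_n z^n. Let α, β be independent samples from the Boltzmann distributions with parameters x_A on A and x_B on B respectively. Then, conditioned on the event {|α| = |β|}, the pair (α, β) is distributed according to the ordinary Boltzmann distribution with parameter x = x_A·x_B on the Hadamard product class A ⊙ B: for every pair (a,b) with |a| = |b| = n, the conditional probability of (a,b) equals (x_A x_B)^n / H(x_A x_B). In particular the rejection algorithm that repeatedly draws independent pairs until the sizes agree is an exact Boltzmann sampler for A ⊙ B with parameter x_A x_B. -/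

import Mathlib

/-- Conditioned on the event `{|α| = |β|}`, a pair of independent
Boltzmann samples (parameters `xA` on `A`, `xB` on `B`) is distributed according
to the Boltzmann distribution with parameter `xA * xB` on the Hadamard product
class `A ⊙ B`: for every pair `(a, b)` with `|a| = |b| = n`, the conditional
probability equals `(xA * xB) ^ n / H(xA * xB)`. Hence the rejection algorithm is
an exact Boltzmann sampler for `A ⊙ B` with parameter `xA * xB`. -/
theorem hadamard_rejection_is_boltzmann
    (A B : Type*) [Countable A] [Countable B]
    (sa : A → ℕ) (sb : B → ℕ)
    (hfa : ∀ n : ℕ, {α : A | sa α = n}.Finite)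
    (hfb : ∀ n : ℕ, {β : B | sb β = n}.Finite)
    (a b : ℕ → ℕ)
    (ha : ∀ n, a n = Nat.card {α : A // sa α = n})
    (hb : ∀ n, b n = Nat.card {β : B // sb β = n})
    (xA xB : ℝ) (hxA : 0 < xA) (hxB : 0 < xB)
    (AX BX : ℝ)
    (hAX : HasSum (fun α : A => xA ^ sa α) AX) (hAXpos : 0 < AX)
    (hBX : HasSum (fun β : B => xB ^ sb β) BX) (hBXpos : 0 < BX)
    (hH : 0 < ∑' n : ℕ, (a n : ℝ) * (b n : ℝ) * (xA * xB) ^ n) :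
    ∀ (α : A) (β : B) (n : ℕ), sa α = n → sb β = n →
      ((xA ^ sa α / AX) * (xB ^ sb β / BX)) /
          (∑' p : A × B,
            if sa p.1 = sb p.2 then (xA ^ sa p.1 / AX) * (xB ^ sb p.2 / BX) else 0)
        = (xA * xB) ^ n / (∑' n : ℕ, (a n : ℝ) * (b n : ℝ) * (xA * xB) ^ n) := by
  intro α β n hα hβ
  set H : ℝ := ∑' n : ℕ, (a n : ℝ) * (b n : ℝ) * (xA * xB) ^ n with hHdef
  -- fintype instances on the fibers
  haveI instA : ∀ n : ℕ, Fintype {α : A // sa α = n} := fun n => (hfa n).fintype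
  haveI instB : ∀ n : ℕ, Fintype {β : B // sb β = n} := fun n => (hfb n).fintype
  -- summability of the Hadamard series
  have hHn : ∀ m : ℕ, (0:ℝ) ≤ (a m : ℝ) * (b m : ℝ) * (xA * xB) ^ m := fun m => by
    positivity
  have hHsum : Summable (fun m : ℕ => (a m : ℝ) * (b m : ℝ) * (xA * xB) ^ m) := by
    by_contra hcon
    rw [hHdef, tsum_eq_zero_of_not_summable hcon] at hH
    exact lt_irrefl 0 hH
  -- the unnormalized weight function
  set f : A × B → ℝ :=
    fun p => if sa p.1 = sb p.2 then xA ^ sa p.1 * xB ^ sb p.2 else 0 with hf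
  -- sigma type indexing the diagonal
  set σ := Σ m : ℕ, ({α : A // sa α = m} × {β : B // sb β = m}) with hσ
  set F : σ → ℝ := fun q => xA ^ sa q.2.1.1 * xB ^ sb q.2.2.1 with hF
  have hFval : ∀ q : σ, F q = (xA * xB) ^ q.1 := by
    rintro ⟨m, ⟨⟨α', hα'⟩, ⟨β', hβ'⟩⟩⟩
    simp [hF, hα', hβ', mul_pow]
  have hfiber : ∀ m : ℕ,
      ∑' q : ({α : A // sa α = m} × {β : B // sb β = m}), F ⟨m, q⟩
        = (a m : ℝ) * (b m : ℝ) * (xA * xB) ^ m := by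
    intro m
    have : ∀ q : ({α : A // sa α = m} × {β : B // sb β = m}),
        F ⟨m, q⟩ = (xA * xB) ^ m := fun q => hFval ⟨m, q⟩
    rw [tsum_congr this, tsum_const, ha, hb, Nat.card_eq_fintype_card,
      Nat.card_eq_fintype_card]
    simp [Fintype.card_prod, nsmul_eq_mul]
    try ring
  have hFnonneg : ∀ q : σ, 0 ≤ F q := fun q => by
    rw [hFval]; positivity
  have hFsum : Summable F := by
    rw [summable_sigma_of_nonneg hFnonneg]
    refine ⟨fun m => .of_finite, ?_⟩
    have : (fun m : ℕ => ∑' q, F ⟨m, q⟩)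
        = fun m : ℕ => (a m : ℝ) * (b m : ℝ) * (xA * xB) ^ m := funext hfiber
    rw [this]; exact hHsum
  have hFHasSum : HasSum F H := by
    have := hFsum.hasSum
    rwa [Summable.tsum_sigma hFsum, tsum_congr hfiber] at this
  -- the equivalence between σ and the diagonal
  set D : Set (A × B) := {p : A × B | sa p.1 = sb p.2} with hD
  let e : σ ≃ D :=
    { toFun := fun q => ⟨(q.2.1.1, q.2.2.1), by
        simp only [hD, Set.mem_setOf_eq, q.2.1.2, q.2.2.2]⟩
      invFun := fun p => ⟨sa p.1.1, (⟨p.1.1, rfl⟩, ⟨p.1.2, p.2.symm⟩)⟩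
      left_inv := by
        rintro ⟨m, ⟨⟨α', hα'⟩, ⟨β', hβ'⟩⟩⟩
        subst hα'
        rfl
      right_inv := by
        rintro ⟨⟨p, q⟩, h⟩
        rfl }
  have hcomp : (fun d : D => f d.1) ∘ e = F := by
    funext q
    rcases q with ⟨m, ⟨⟨α', hα'⟩, ⟨β', hβ'⟩⟩⟩
    simp [e, hf, hF, hα', hβ']
  have hDsum : HasSum (fun d : D => f d.1) H := by
    rw [← e.hasSum_iff, hcomp]
    exact hFHasSum
  have hsupp : Function.support f ⊆ D := by
    intro p hp
    by_contra hpD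
    exact hp (by simp [hf, hD] at hpD ⊢; intro h; exact absurd h hpD)
  have hfHasSum : HasSum f H :=
    (hasSum_subtype_iff_of_support_subset hsupp).1 hDsum
  -- compute the denominator
  have hden : (∑' p : A × B,
      if sa p.1 = sb p.2 then (xA ^ sa p.1 / AX) * (xB ^ sb p.2 / BX) else 0)
      = H / (AX * BX) := by
    have : (fun p : A × B =>
        if sa p.1 = sb p.2 then (xA ^ sa p.1 / AX) * (xB ^ sb p.2 / BX) else 0)
        = fun p : A × B => f p / (AX * BX) := by
      funext p
      by_cases h : sa p.1 = sb p.2 <;> simp [hf, h] <;> ring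
    rw [this, tsum_div_const, hfHasSum.tsum_eq]
  rw [hden, hα, hβ]
  have hHne : H ≠ 0 := ne_of_gt hH
  have hAXne : AX ≠ 0 := ne_of_gt hAXpos
  have hBXne : BX ≠ 0 := ne_of_gt hBXpos
  field_simp
  ring
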